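/- Kleisli composition of H₀M is ω-continuous in the trajectory argument: for every f : X → H₀M Y and every ω-chain (d₀,e₀) ⊑ (d₁,e₁) ⊑ … in H₀M X, one has f^†(⊔ᵢ (dᵢ,eᵢ)) = ⊔ᵢ f^†(dᵢ,eᵢ). -/
import Mathlib


open scoped ENNReal NNReal
open Classical

universe u v w

/-- Raw trajectories: a duration in `ℝ≥0∞` and a partial evolution `ℝ≥0 → Option X`. -/
abbrev Traj (X : Type u) := ℝ≥0∞ × (ℝ≥0 → Option X)

/-- The flattening condition: if the duration is finite, the evolution is constant
from the duration onwards.  Membership in `H₀M X` means exactly `Flat`. -/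
def Flat {X : Type u} (p : Traj X) : Prop :=
  ∀ t : ℝ≥0, p.1 ≤ (t : ℝ≥0∞) → p.2 t = p.2 p.1.toNNReal

/-- The unit of `H₀M`. -/
def eta {X : Type u} (x : X) : Traj X := (0, fun _ => some x)

/-- The Kleisli lifting `f^†` of the monad `H₀M`. -/
noncomputable def kl {X : Type u} {Y : Type v} (f : X → Traj Y) (p : Traj X) : Traj Y :=
  if p.1 = ⊤ then (p.1, fun t => (p.2 t).bind fun x' => (f x').2 0)
  else
    match p.2 p.1.toNNReal with
    | none => (p.1, fun t => (p.2 t).bind fun x' => (f x').2 0)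
    | some x =>
        (p.1 + (f x).1,
          fun t =>
            if (t : ℝ≥0∞) < p.1 then (p.2 t).bind fun x' => (f x').2 0
            else (f x).2 (t - p.1.toNNReal))

/-- Membership in `H₊ X ⊆ H₀M X`: the evolution is not everywhere `none`, and it is
defined at every time instant strictly below the duration. -/
def memHp {X : Type u} (p : Traj X) : Prop :=
  p.2 ≠ (fun _ => none) ∧ ∀ t : ℝ≥0, (t : ℝ≥0∞) < p.1 → p.2 t ≠ none

/-- Membership in `H X ⊆ H₀M X`: either the evolution is total, or the duration is `∞`
and the domain of the evolution is downward closed. -/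
def memH {X : Type u} (p : Traj X) : Prop :=
  (∀ t, p.2 t ≠ none) ∨
    (p.1 = ⊤ ∧ ∀ s t : ℝ≥0, s ≤ t → p.2 t ≠ none → p.2 s ≠ none)

/-- The approximation order `⊑` on `H₀M X`. -/
def TrajLE {X : Type u} (p q : Traj X) : Prop :=
  p.1 ≤ q.1 ∧ (∀ t, p.2 t ≠ none → q.2 t = p.2 t) ∧
    (p.1 ≠ ⊤ → p.2 p.1.toNNReal ≠ none → p.1 = q.1)

/-- Join of an ω-chain in `H₀M X`: the duration is the supremum of the durations, and
the evolution at `t` is the common value `(c i).2 t` whenever it is `≠ none` for some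
`i`, and `none` otherwise. -/
noncomputable def chainJoin {X : Type u} (c : ℕ → Traj X) : Traj X :=
  (⨆ i, (c i).1,
    fun t => if h : ∃ i, (c i).2 t ≠ none then (c h.choose).2 t else none)

/-- `d⋆ = sup { s < d ∣ e is defined on [0, s) }`. -/
noncomputable def dstar {X : Type u} (p : Traj X) : ℝ≥0∞ :=
  sSup {s : ℝ≥0∞ | s < p.1 ∧ ∀ t : ℝ≥0, (t : ℝ≥0∞) < s → p.2 t ≠ none}

/-- The retraction `ρ : H₀M X → H₀M X` onto `H X`. -/
noncomputable def rho {X : Type u} (p : Traj X) : Traj X :=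
  ((if ∀ t, p.2 t ≠ none then p.1 else ⊤),
    fun t =>
      if (t : ℝ≥0∞) ≤ dstar p then p.2 t
      else if ∀ t', p.2 t' ≠ none then p.2 (dstar p).toNNReal else none)

/-- The iterates `f⁽ⁿ⁾` of `f : X → H₀M (Y ⊕ X)`. -/
noncomputable def iter {X Y : Type u} (f : X → Traj (Y ⊕ X)) : ℕ → X → Traj Y
  | 0, _ => (0, fun _ => none)
  | n + 1, x => kl (Sum.elim eta (iter f n)) (f x)

/-- The least-fixpoint iteration `f^‡ x = ⊔ₙ f⁽ⁿ⁾ x`. -/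
noncomputable def iterStar {X Y : Type u} (f : X → Traj (Y ⊕ X)) (x : X) : Traj Y :=
  chainJoin fun n => iter f n x

/-- `f : X → H₊ (A ⊕ B)` is progressive in `B` (guarded in the second summand). -/
def Prog {X : Type u} {A B : Type v} (f : X → Traj (A ⊕ B)) : Prop :=
  ∀ x, ∃ a : A, (f x).2 0 = some (Sum.inl a)

-- auxiliary lemmas

lemma kl_some {X : Type u} {Y : Type v} (f : X → Traj Y) {p : Traj X} (hp : p.1 ≠ ⊤)
    {x : X} (hx : p.2 p.1.toNNReal = some x) :
    kl f p = (p.1 + (f x).1,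
      fun (t : ℝ≥0) => if (t : ℝ≥0∞) < p.1 then (p.2 t).bind fun x' => (f x').2 0
        else (f x).2 (t - p.1.toNNReal)) := by
  unfold kl
  rw [if_neg hp, hx]

lemma kl_none {X : Type u} {Y : Type v} (f : X → Traj Y) {p : Traj X}
    (hp : p.1 = ⊤ ∨ p.2 p.1.toNNReal = none) :
    kl f p = (p.1, fun t => (p.2 t).bind fun x' => (f x').2 0) := by
  unfold kl
  rcases hp with hp | hp
  · rw [if_pos hp]
  · by_cases h : p.1 = ⊤
    · rw [if_pos h]
    · rw [if_neg h, hp]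

lemma TrajLE.refl {X : Type u} (p : Traj X) : TrajLE p p :=
  ⟨le_rfl, fun _ _ => rfl, fun _ _ => rfl⟩

lemma TrajLE.trans {X : Type u} {p q r : Traj X} (h1 : TrajLE p q) (h2 : TrajLE q r) :
    TrajLE p r := by
  obtain ⟨hd1, he1, hs1⟩ := h1
  obtain ⟨hd2, he2, hs2⟩ := h2
  refine ⟨hd1.trans hd2, fun t ht => ?_, fun htop hne => ?_⟩
  · rw [he2 t (by rw [he1 t ht]; exact ht), he1 t ht]
  · have hpq := hs1 htop hne
    have hq : q.2 q.1.toNNReal ≠ none := by rw [← hpq, he1 _ hne]; exact hne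
    rw [hpq, hs2 (hpq ▸ htop) hq]

lemma chain_mono {X : Type u} (c : ℕ → Traj X) (hchain : ∀ i, TrajLE (c i) (c (i + 1))) :
    ∀ {i j : ℕ}, i ≤ j → TrajLE (c i) (c j) := by
  intro i j hij
  induction j, hij using Nat.le_induction with
  | base => exact TrajLE.refl _
  | succ n hn ih => exact ih.trans (hchain n)

lemma chain_agree {X : Type u} (c : ℕ → Traj X) (hchain : ∀ i, TrajLE (c i) (c (i + 1)))
    (i j : ℕ) (t : ℝ≥0) (hi : (c i).2 t ≠ none) (hj : (c j).2 t ≠ none) :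
    (c i).2 t = (c j).2 t := by
  rcases le_total i j with h | h
  · exact ((chain_mono c hchain h).2.1 t hi).symm
  · exact (chain_mono c hchain h).2.1 t hj

lemma chainJoin_snd {X : Type u} (g : ℕ → Traj X) (t : ℝ≥0) (v : Option X)
    (h1 : ∀ j, (g j).2 t ≠ none → (g j).2 t = v)
    (h2 : v ≠ none → ∃ j, (g j).2 t ≠ none) :
    (chainJoin g).2 t = v := by
  show (if h : ∃ i, (g i).2 t ≠ none then (g h.choose).2 t else none) = v
  split
  next h => exact h1 _ h.choose_spec
  next h =>
    cases hv : v with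
    | none => rfl
    | some y => exact absurd (h2 (by simp [hv])) h

lemma chainJoin_ev {X : Type u} (c : ℕ → Traj X) (hchain : ∀ i, TrajLE (c i) (c (i + 1)))
    (t : ℝ≥0) (i : ℕ) (hi : (c i).2 t ≠ none) :
    (chainJoin c).2 t = (c i).2 t :=
  chainJoin_snd c t _ (fun j hj => chain_agree c hchain j i t hj hi) (fun _ => ⟨i, hi⟩)

lemma chainJoin_ne_none {X : Type u} (c : ℕ → Traj X) (t : ℝ≥0)
    (h : (chainJoin c).2 t ≠ none) : ∃ i, (c i).2 t ≠ none := by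
  by_contra hc
  apply h
  show (if h : ∃ i, (c i).2 t ≠ none then (c h.choose).2 t else none) = none
  rw [dif_neg hc]

/-- Kleisli composition of `H₀M` is ω-continuous in the trajectory argument. -/
theorem kl_continuous_traj {X : Type u} {Y : Type v} (f : X → Traj Y)
    (hf : ∀ x, Flat (f x)) (c : ℕ → Traj X)
    (hflat : ∀ i, Flat (c i)) (hchain : ∀ i, TrajLE (c i) (c (i + 1))) :
    kl f (chainJoin c) = chainJoin fun i => kl f (c i) := by
  by_cases hA : ∃ i, (c i).1 ≠ ⊤ ∧ (c i).2 (c i).1.toNNReal ≠ none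
  · obtain ⟨i, hdi, hei⟩ := hA
    obtain ⟨x, hx⟩ := Option.ne_none_iff_exists'.mp hei
    have hdle : ∀ j, (c j).1 ≤ (c i).1 := by
      intro j
      rcases le_total j i with h | h
      · exact (chain_mono c hchain h).1
      · exact ((chain_mono c hchain h).2.2 hdi hei).ge
    have hDi : (chainJoin c).1 = (c i).1 :=
      le_antisymm (iSup_le hdle) (le_iSup (fun j => (c j).1) i)
    have hEx : (chainJoin c).2 (chainJoin c).1.toNNReal = some x := by
      rw [hDi, chainJoin_ev c hchain _ i hei, hx]
    have hkli : kl f (c i) = ((c i).1 + (f x).1,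
        fun (t : ℝ≥0) => if (t : ℝ≥0∞) < (c i).1 then ((c i).2 t).bind fun x' => (f x').2 0
          else (f x).2 (t - (c i).1.toNNReal)) := kl_some f hdi hx
    have hcase : ∀ j, kl f (c j) = ((c i).1 + (f x).1,
          fun (t : ℝ≥0) => if (t : ℝ≥0∞) < (c i).1 then ((c j).2 t).bind fun x' => (f x').2 0
            else (f x).2 (t - (c i).1.toNNReal))
        ∨ kl f (c j) = ((c j).1, fun (t : ℝ≥0) => ((c j).2 t).bind fun x' => (f x').2 0)
            ∧ ∀ t : ℝ≥0, ¬ ((t : ℝ≥0∞) < (c i).1) → (c j).2 t = none := by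
      intro j
      have hjtop : (c j).1 ≠ ⊤ := fun h => hdi (top_le_iff.mp (h ▸ hdle j))
      by_cases hj : (c j).2 (c j).1.toNNReal ≠ none
      · left
        have hdj : (c j).1 = (c i).1 := by
          rcases le_total j i with h | h
          · exact (chain_mono c hchain h).2.2 hjtop hj
          · exact ((chain_mono c hchain h).2.2 hdi hei).symm
        have hj2 := hj
        rw [hdj] at hj2
        have hxj : (c j).2 (c j).1.toNNReal = some x := by
          rw [hdj, chain_agree c hchain j i _ hj2 hei, hx]
        rw [kl_some f hjtop hxj, hdj]
      · right
        push_neg at hj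
        refine ⟨kl_none f (Or.inr hj), fun t ht => ?_⟩
        have h1 : (c j).1 ≤ (t : ℝ≥0∞) := le_trans (hdle j) (not_lt.mp ht)
        rw [hflat j t h1, hj]
    rw [kl_some f (by rw [hDi]; exact hdi) hEx, hDi]
    refine Prod.ext ?_ (funext fun t => ?_)
    · show (c i).1 + (f x).1 = ⨆ j, (kl f (c j)).1
      refine le_antisymm ?_ (iSup_le fun j => ?_)
      · have h := le_iSup (fun j => (kl f (c j)).1) i
        rw [hkli] at h
        exact h
      · rcases hcase j with h | ⟨h, _⟩
        · rw [h]
        · rw [h]; exact le_trans (hdle j) le_self_add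
    · show (if (t : ℝ≥0∞) < (c i).1 then ((chainJoin c).2 t).bind fun x' => (f x').2 0
          else (f x).2 (t - (c i).1.toNNReal)) = (chainJoin fun j => kl f (c j)).2 t
      refine (chainJoin_snd _ t _ ?_ ?_).symm
      · intro j hj
        rcases hcase j with h | ⟨h, hn⟩
        · rw [h] at hj ⊢
          dsimp only at hj ⊢
          by_cases ht : (t : ℝ≥0∞) < (c i).1
          · rw [if_pos ht] at hj
            have hjt : (c j).2 t ≠ none := fun h0 => by rw [h0] at hj; exact hj rfl
            rw [chainJoin_ev c hchain t j hjt, if_pos ht]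
          · rw [if_neg ht, if_neg ht]
        · rw [h] at hj ⊢
          dsimp only at hj ⊢
          have hjt : (c j).2 t ≠ none := fun h0 => by rw [h0] at hj; exact hj rfl
          by_cases ht : (t : ℝ≥0∞) < (c i).1
          · rw [if_pos ht, chainJoin_ev c hchain t j hjt]
          · exact absurd (hn t ht) hjt
      · intro hv
        by_cases ht : (t : ℝ≥0∞) < (c i).1
        · rw [if_pos ht] at hv
          have hE : (chainJoin c).2 t ≠ none := fun h0 => by rw [h0] at hv; exact hv rfl
          obtain ⟨k, hk⟩ := chainJoin_ne_none c t hE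
          have hck : (chainJoin c).2 t = (c k).2 t := chainJoin_ev c hchain t k hk
          refine ⟨k, ?_⟩
          rcases hcase k with h | ⟨h, _⟩ <;> rw [h] <;> dsimp only
          · rw [if_pos ht, ← hck]; exact hv
          · rw [← hck]; exact hv
        · refine ⟨i, ?_⟩
          rw [hkli]
          dsimp only
          rw [if_neg ht]
          rw [if_neg ht] at hv
          exact hv
  · push_neg at hA
    have hklj : ∀ j, kl f (c j)
        = ((c j).1, fun (t : ℝ≥0) => ((c j).2 t).bind fun x' => (f x').2 0) := by
      intro j
      by_cases h : (c j).1 = ⊤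
      · exact kl_none f (Or.inl h)
      · exact kl_none f (Or.inr (hA j h))
    have hJ : kl f (chainJoin c) = ((chainJoin c).1,
        fun (t : ℝ≥0) => ((chainJoin c).2 t).bind fun x' => (f x').2 0) := by
      apply kl_none
      by_cases hD : (chainJoin c).1 = ⊤
      · exact Or.inl hD
      · right
        by_contra hE
        obtain ⟨k, hk⟩ := chainJoin_ne_none c _ hE
        have hkt : (c k).1 ≠ ⊤ := by
          intro h
          exact hD (top_le_iff.mp (h ▸ le_iSup (fun j => (c j).1) k))
        have hle' : (c k).1 ≤ (((chainJoin c).1.toNNReal : ℝ≥0) : ℝ≥0∞) := by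
          rw [ENNReal.coe_toNNReal hD]
          exact le_iSup (fun j => (c j).1) k
        rw [hflat k _ hle', hA k hkt] at hk
        exact hk rfl
    rw [hJ]
    refine Prod.ext ?_ (funext fun t => ?_)
    · show (chainJoin c).1 = ⨆ j, (kl f (c j)).1
      show (⨆ j, (c j).1) = ⨆ j, (kl f (c j)).1
      exact iSup_congr fun j => by rw [hklj j]
    · show ((chainJoin c).2 t).bind (fun x' => (f x').2 0) = (chainJoin fun j => kl f (c j)).2 t
      refine (chainJoin_snd _ t _ ?_ ?_).symm
      · intro j hj
        rw [hklj j] at hj ⊢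
        dsimp only at hj ⊢
        have hjt : (c j).2 t ≠ none := fun h0 => by rw [h0] at hj; exact hj rfl
        rw [chainJoin_ev c hchain t j hjt]
      · intro hv
        have hE : (chainJoin c).2 t ≠ none := fun h0 => by rw [h0] at hv; exact hv rfl
        obtain ⟨k, hk⟩ := chainJoin_ne_none c t hE
        refine ⟨k, ?_⟩
        rw [hklj k]
        dsimp only
        rw [← chainJoin_ev c hchain t k hk]
        exact hv
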